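/- Every YES-instance (D,K,T) of MD-RSPP has a solution path cover whose union contains at most 2^{|K|} + |K| distinct vertices. -/

import Mathlib

open Relation

variable {V : Type*} [DecidableEq V]

/-- The adjacency relation of a digraph given by its edge set. -/
def Adj (E : Finset (V × V)) : V → V → Prop := fun a b => (a, b) ∈ E

/-- `D` is a digraph: no self-loops (no parallel edges since edges form a set). -/
def IsDigraph (D : Finset (V × V)) : Prop := ∀ e ∈ D, e.1 ≠ e.2

/-- `l` is a directed `s`-`t`-path w.r.t. the adjacency relation `A`:
a nonempty duplicate-free list of vertices, consecutive ones adjacent,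
starting at `s` and ending at `t`. -/
def DiPath (A : V → V → Prop) (s t : V) (l : List V) : Prop :=
  l.Chain' A ∧ l.Nodup ∧ l.head? = some s ∧ l.getLast? = some t

/-- Adjacency in the transitive closure `T(D)` of the digraph with edge set `E`:
`(u,v)` is an edge iff `u ≠ v` and `v` is reachable from `u` in `E`. -/
def TCAdj (E : Finset (V × V)) (u v : V) : Prop :=
  u ≠ v ∧ Relation.ReflTransGen (Adj E) u v

/-- The outdegree of `v` in the digraph with edge set `H`. -/
def outDeg (H : Finset (V × V)) (v : V) : ℕ :=
  (H.filter fun e => e.1 = v).card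

/-- The list of (directed) edges traversed by a list of vertices. -/
def listEdges (l : List V) : List (V × V) := l.zip l.tail

/-- `H` is a solution graph of the MD-RSPP instance `(D,K,T)`: a subgraph of
`T(D)` of maximum outdegree at most `T` containing a directed `s`-`t`-path for
every commodity `(s,t) ∈ K`. -/
def RSPPSolution (D K : Finset (V × V)) (T : ℕ) (H : Finset (V × V)) : Prop :=
  (∀ e ∈ H, TCAdj D e.1 e.2) ∧ (∀ v, outDeg H v ≤ T) ∧
  (∀ k ∈ K, ∃ l, DiPath (Adj H) k.1 k.2 l)

/-- Every YES-instance `(D,K,T)` of MD-RSPP has a solution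
path cover (a family `Q` of witness paths, one per commodity, i.e. directed
paths in `T(D)`, whose union is a solution graph) whose union contains at most
`2^|K| + |K|` distinct vertices. -/
lemma listEdges_cons_cons (x y : V) (t : List V) :
    listEdges (x :: y :: t) = (x, y) :: listEdges (y :: t) := rfl
lemma edge_mem {l : List V} {e : V × V} (h : e ∈ listEdges l) : e.1 ∈ l ∧ e.2 ∈ l := by
  obtain ⟨a, b⟩ := e
  have h2 := List.of_mem_zip h
  exact ⟨h2.1, List.mem_of_mem_tail h2.2⟩
lemma edge_fst_dropLast : ∀ {l : List V} {e : V × V}, e ∈ listEdges l → e.1 ∈ l.dropLast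
  | [], e, h => by simp [listEdges] at h
  | [x], e, h => by simp [listEdges] at h
  | x :: y :: t, e, h => by
    rw [listEdges_cons_cons] at h
    rcases List.mem_cons.1 h with rfl | h
    · simp
    · have h2 := edge_fst_dropLast h
      rw [List.dropLast_cons₂]
      exact List.mem_cons_of_mem _ h2
lemma edges_append : ∀ (A : List V) (a : V) (Z : List V),
    listEdges (A ++ a :: Z) = listEdges (A ++ [a]) ++ listEdges (a :: Z)
  | [], a, Z => by simp [listEdges]
  | [p], a, Z => by simp [listEdges_cons_cons, listEdges]
  | p :: q :: A, a, Z => by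
    have ih := edges_append (q :: A) a Z
    simp only [List.cons_append, listEdges_cons_cons] at *
    rw [ih]

lemma chain'_edges {R : V → V → Prop} :
    ∀ {l : List V}, l.Chain' R → ∀ e ∈ listEdges l, R e.1 e.2
  | [], _, e, he => by simp [listEdges] at he
  | [x], _, e, he => by simp [listEdges] at he
  | x :: y :: t, h, e, he => by
    rw [listEdges_cons_cons] at he
    rcases List.mem_cons.1 he with rfl | he
    · exact (List.isChain_cons_cons.1 h).1
    · exact chain'_edges (List.isChain_cons_cons.1 h).2 e he

lemma chain'_of_edges {R : V → V → Prop} :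
    ∀ {l : List V}, (∀ e ∈ listEdges l, R e.1 e.2) → l.Chain' R
  | [], _ => List.isChain_nil
  | [x], _ => List.isChain_singleton x
  | x :: y :: t, h => by
    refine List.isChain_cons_cons.2 ⟨?_, chain'_of_edges fun e he => h e ?_⟩
    · exact h (x, y) (by rw [listEdges_cons_cons]; exact List.mem_cons_self)
    · rw [listEdges_cons_cons]; exact List.mem_cons_of_mem _ he

lemma outDeg_mono {H₁ H₂ : Finset (V × V)} (h : H₁ ⊆ H₂) (x : V) :
    outDeg H₁ x ≤ outDeg H₂ x :=
  Finset.card_le_card (Finset.filter_subset_filter _ h)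

lemma chain'_reach {D : Finset (V × V)} :
    ∀ {l : List V} {x y : V}, List.Chain' (TCAdj D) (x :: l) → y ∈ l →
      Relation.ReflTransGen (Adj D) x y
  | [], x, y, _, hy => absurd hy List.not_mem_nil
  | w :: l, x, y, h, hy => by
    have h1 := (List.isChain_cons_cons.1 h).1
    have h2 := (List.isChain_cons_cons.1 h).2
    rcases List.mem_cons.1 hy with rfl | hy
    · exact h1.2
    · exact h1.2.trans (chain'_reach h2 hy)

lemma surgery_aux {D : Finset (V × V)} {s t a b c : V} {A M C : List V}
    (hl : DiPath (TCAdj D) s t (A ++ a :: (M ++ b :: c :: C))) :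
    ∃ l', DiPath (TCAdj D) s t l' ∧
      l'.length < (A ++ a :: (M ++ b :: c :: C)).length ∧
      b ∉ l' ∧
      (∀ e ∈ listEdges l', e.1 ≠ a → e ∈ listEdges (A ++ a :: (M ++ b :: c :: C))) ∧
      (∀ e ∈ listEdges l', e.1 = a →
        e = (a, c) ∧ (b, c) ∈ listEdges (A ++ a :: (M ++ b :: c :: C))) := by
  obtain ⟨hch, hnd, hhd, hlast⟩ := hl
  have hnd' : ((A ++ [a]) ++ ((M ++ [b]) ++ (c :: C))).Nodup := by
    have heq : A ++ a :: (M ++ b :: c :: C) = (A ++ [a]) ++ ((M ++ [b]) ++ (c :: C)) := by simp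
    rwa [heq] at hnd
  have d1 : List.Disjoint (A ++ [a]) ((M ++ [b]) ++ (c :: C)) :=
    List.disjoint_of_nodup_append hnd'
  have hnd_l : (A ++ [a]).Nodup := (List.nodup_append.1 hnd').1
  have hnd_r : ((M ++ [b]) ++ (c :: C)).Nodup := (List.nodup_append.1 hnd').2.1
  have d2 : List.Disjoint (M ++ [b]) (c :: C) := List.disjoint_of_nodup_append hnd_r
  have hnd_cC : (c :: C).Nodup := (List.nodup_append.1 hnd_r).2.1
  have hac : a ≠ c := by
    intro h
    exact d1 (List.mem_append_right A (List.mem_singleton_self a))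
      (by rw [h]; exact List.mem_append_right _ List.mem_cons_self)
  have hbl : b ∉ A ++ a :: c :: C := by
    intro hb
    have hbr : b ∈ (M ++ [b]) ++ (c :: C) :=
      List.mem_append_left _ (List.mem_append_right M (List.mem_singleton_self b))
    rcases List.mem_append.1 (by simpa using hb : b ∈ (A ++ [a]) ++ (c :: C)) with h | h
    · exact d1 h hbr
    · exact d2 (List.mem_append_right M (List.mem_singleton_self b)) h
  -- edges equations
  have hE : listEdges (A ++ a :: (M ++ b :: c :: C)) =
      listEdges (A ++ [a]) ++ (listEdges ((a :: M) ++ [b]) ++ ((b, c) :: listEdges (c :: C))) := by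
    rw [edges_append A a (M ++ b :: c :: C)]
    congr 1
    have h₁ : a :: (M ++ b :: c :: C) = (a :: M) ++ b :: (c :: C) := by simp
    rw [h₁, edges_append (a :: M) b (c :: C), listEdges_cons_cons]
  have hE' : listEdges (A ++ a :: c :: C) =
      listEdges (A ++ [a]) ++ ((a, c) :: listEdges (c :: C)) := by
    rw [edges_append A a (c :: C), listEdges_cons_cons]
  have haA : a ∉ A := by
    intro h
    have := (List.nodup_append.1 hnd_l).2.2
    exact this a h a (List.mem_singleton_self a) rfl
  refine ⟨A ++ a :: c :: C, ⟨?_, ?_, ?_, ?_⟩, ?_, hbl, ?_, ?_⟩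
  · -- Chain'
    have hshape : A ++ a :: c :: C = (A ++ [a]) ++ (c :: C) := by simp
    rw [hshape]
    refine List.isChain_append.2 ⟨?_, ?_, ?_⟩
    · have : List.Chain' (TCAdj D) ((A ++ [a]) ++ (M ++ b :: c :: C)) := by
        have heq : A ++ a :: (M ++ b :: c :: C) = (A ++ [a]) ++ (M ++ b :: c :: C) := by simp
        rwa [heq] at hch
      exact (List.isChain_append.1 this).1
    · have h1 : List.Chain' (TCAdj D) (a :: (M ++ b :: c :: C)) :=
        (List.isChain_append.1 hch).2.1
      have heq : a :: (M ++ b :: c :: C) = ((a :: M) ++ [b]) ++ (c :: C) := by simp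
      rw [heq] at h1
      exact (List.isChain_append.1 h1).2.1
    · intro x hx y hy
      rw [List.getLast?_concat] at hx
      simp only [Option.mem_some_iff] at hx
      simp only [List.head?_cons, Option.mem_some_iff] at hy
      subst hx; subst hy
      refine ⟨hac, ?_⟩
      have h1 : List.Chain' (TCAdj D) (a :: (M ++ b :: c :: C)) :=
        (List.isChain_append.1 hch).2.1
      exact chain'_reach h1 (by simp)
  · -- Nodup
    have hshape : A ++ a :: c :: C = (A ++ [a]) ++ (c :: C) := by simp
    rw [hshape]
    refine List.nodup_append.2 ⟨hnd_l, hnd_cC, ?_⟩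
    intro x hx y hy hxy
    exact d1 hx (List.mem_append_right _ (hxy ▸ hy))
  · -- head?
    have h1 : (A ++ a :: c :: C).head? = (A ++ a :: (M ++ b :: c :: C)).head? := by
      cases A <;> rfl
    rw [h1]; exact hhd
  · -- getLast?
    have h1 : (A ++ a :: c :: C).getLast? = (c :: C).getLast? := by
      have : A ++ a :: c :: C = (A ++ [a]) ++ c :: C := by simp
      rw [this, List.getLast?_append_cons]
    have h2 : (A ++ a :: (M ++ b :: c :: C)).getLast? = (c :: C).getLast? := by
      have : A ++ a :: (M ++ b :: c :: C) = (A ++ a :: M ++ [b]) ++ c :: C := by simp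
      rw [this, List.getLast?_append_cons]
    rw [h1, ← h2]; exact hlast
  · -- length
    simp only [List.length_append, List.length_cons]
    omega
  · -- clause 1
    intro e he hea
    rw [hE'] at he
    rw [hE]
    rcases List.mem_append.1 he with h | h
    · exact List.mem_append_left _ h
    · rcases List.mem_cons.1 h with rfl | h
      · exact absurd rfl hea
      · exact List.mem_append_right _ (List.mem_append_right _ (List.mem_cons_of_mem _ h))
  · -- clause 2
    intro e he hea
    rw [hE'] at he
    rcases List.mem_append.1 he with h | h
    · exfalso
      have := edge_fst_dropLast h
      rw [List.dropLast_concat] at this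
      rw [hea] at this
      exact haA this
    · rcases List.mem_cons.1 h with rfl | h
      · refine ⟨rfl, ?_⟩
        rw [hE]
        exact List.mem_append_right _ (List.mem_append_right _ List.mem_cons_self)
      · exfalso
        have h1 := (edge_mem h).1
        rw [hea] at h1
        exact hac (by
          rcases List.mem_cons.1 h1 with h2 | h2
          · exact h2
          · exfalso
            exact d1 (List.mem_append_right A (List.mem_singleton_self a))
              (List.mem_append_right _ (List.mem_cons_of_mem _ h2)))

set_option maxHeartbeats 800000 in
lemma surgery {D : Finset (V × V)} {s t u v : V} {l : List V}
    (hl : DiPath (TCAdj D) s t l) (hu : u ∈ l) (hv : v ∈ l)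
    (huv : u ≠ v) (hut : u ≠ t) (hvt : v ≠ t) :
    ∃ l', DiPath (TCAdj D) s t l' ∧ l'.length < l.length ∧
      (∀ e ∈ listEdges l', e.1 ≠ u → e.1 ≠ v → e ∈ listEdges l) ∧
      (∀ e ∈ listEdges l', e.1 = u → ∃ e' ∈ listEdges l, e'.1 = v ∧ e.2 = e'.2) ∧
      (∀ e ∈ listEdges l', e.1 = v → ∃ e' ∈ listEdges l, e'.1 = u ∧ e.2 = e'.2) := by
  obtain ⟨A, Z, rfl⟩ := List.append_of_mem hu
  have hvm : v ∈ A ∨ v ∈ Z := by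
    rcases List.mem_append.1 hv with h | h
    · exact Or.inl h
    · rcases List.mem_cons.1 h with h | h
      · exact absurd h.symm huv
      · exact Or.inr h
  rcases hvm with hvA | hvZ
  · -- v before u
    obtain ⟨A', M, rfl⟩ := List.append_of_mem hvA
    have hsh : (A' ++ v :: M) ++ u :: Z = A' ++ v :: (M ++ u :: Z) := by simp
    rw [hsh] at hl hu hv ⊢
    -- Z ≠ []
    obtain ⟨c, C, rfl⟩ : ∃ c C, Z = c :: C := by
      cases Z with
      | nil =>
        exfalso
        have : (A' ++ v :: (M ++ u :: ([] : List V))).getLast? = some u := by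
          have : A' ++ v :: (M ++ u :: ([] : List V)) = (A' ++ v :: M) ++ [u] := by simp
          rw [this, List.getLast?_concat]
        rw [hl.2.2.2] at this
        exact hut (Option.some_injective _ this).symm
      | cons c C => exact ⟨c, C, rfl⟩
    obtain ⟨l', hdi, hlen, hbout, hc1, hc2⟩ := surgery_aux (a := v) (b := u) hl
    refine ⟨l', hdi, hlen, ?_, ?_, ?_⟩
    · intro e he h1 h2; exact hc1 e he h2
    · intro e he h1
      exfalso
      exact hbout (h1 ▸ (edge_mem he).1)
    · intro e he h1
      obtain ⟨h2, h3⟩ := hc2 e he h1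
      exact ⟨(u, c), h3, rfl, by rw [h2]⟩
  · -- u before v
    obtain ⟨M, C0, rfl⟩ := List.append_of_mem hvZ
    obtain ⟨c, C, rfl⟩ : ∃ c C, C0 = c :: C := by
      cases C0 with
      | nil =>
        exfalso
        have : (A ++ u :: (M ++ v :: ([] : List V))).getLast? = some v := by
          have : A ++ u :: (M ++ v :: ([] : List V)) = (A ++ u :: M) ++ [v] := by simp
          rw [this, List.getLast?_concat]
        rw [hl.2.2.2] at this
        exact hvt (Option.some_injective _ this).symm
      | cons c C => exact ⟨c, C, rfl⟩
    obtain ⟨l', hdi, hlen, hbout, hc1, hc2⟩ := surgery_aux (a := u) (b := v) hl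
    refine ⟨l', hdi, hlen, ?_, ?_, ?_⟩
    · intro e he h1 h2; exact hc1 e he h1
    · intro e he h1
      obtain ⟨h2, h3⟩ := hc2 e he h1
      exact ⟨(v, c), h3, rfl, by rw [h2]⟩
    · intro e he h1
      exfalso
      exact hbout (h1 ▸ (edge_mem he).1)


theorem mdrspp_small_solution_path_cover {V : Type*} [Fintype V] [DecidableEq V]
    (D K : Finset (V × V)) (T : ℕ)
    (hD : IsDigraph D)
    (hyes : ∃ H : Finset (V × V), RSPPSolution D K T H) :
    ∃ Q : V × V → List V,
      (∀ k ∈ K, DiPath (TCAdj D) k.1 k.2 (Q k)) ∧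
      RSPPSolution D K T (K.biUnion fun k => (listEdges (Q k)).toFinset) ∧
      (K.biUnion fun k => (Q k).toFinset).card ≤ 2 ^ K.card + K.card := by
  classical
  obtain ⟨H, hH1, hH2, hH3⟩ := hyes
  set Sys : (V × V → List V) → Prop := fun Q =>
    (∀ k ∈ K, DiPath (TCAdj D) k.1 k.2 (Q k)) ∧
    (∀ x, outDeg (K.biUnion fun k => (listEdges (Q k)).toFinset) x ≤ T) with hSysdef
  have hex : ∃ n : ℕ, ∃ Q, Sys Q ∧ (∑ k ∈ K, (Q k).length) = n := by
    set Q0 : V × V → List V := fun k => if h : k ∈ K then (hH3 k h).choose else [] with hQ0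
    refine ⟨_, Q0, ⟨?_, ?_⟩, rfl⟩
    · intro k hk
      have hs : DiPath (Adj H) k.1 k.2 (Q0 k) := by
        rw [hQ0]; simp only [dif_pos hk]; exact (hH3 k hk).choose_spec
      obtain ⟨h1, h2, h3, h4⟩ := hs
      exact ⟨h1.imp fun a b hab => hH1 (a, b) hab, h2, h3, h4⟩
    · intro x
      refine le_trans (outDeg_mono ?_ x) (hH2 x)
      intro e he
      obtain ⟨k, hk, hek⟩ := Finset.mem_biUnion.1 he
      rw [List.mem_toFinset] at hek
      have hs : DiPath (Adj H) k.1 k.2 (Q0 k) := by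
        rw [hQ0]; simp only [dif_pos hk]; exact (hH3 k hk).choose_spec
      exact chain'_edges hs.1 e hek
  obtain ⟨Q, hQ, hQn⟩ := Nat.find_spec hex
  set W : Finset V := K.biUnion fun k => (Q k).toFinset with hWdef
  set LastF : Finset V := K.image Prod.snd with hLdef
  have key : ∀ u v : V, u ∈ W → u ∉ LastF → v ∉ LastF →
      (K.filter fun k => u ∈ Q k) = (K.filter fun k => v ∈ Q k) → u = v := by
    intro u v hu huL hvL hfe
    by_contra huv
    have hiff : ∀ k ∈ K, (u ∈ Q k ↔ v ∈ Q k) := by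
      intro k hk
      constructor <;> intro h
      · have h2 : k ∈ K.filter fun k => u ∈ Q k := Finset.mem_filter.2 ⟨hk, h⟩
        rw [hfe] at h2; exact (Finset.mem_filter.1 h2).2
      · have h2 : k ∈ K.filter fun k => v ∈ Q k := Finset.mem_filter.2 ⟨hk, h⟩
        rw [← hfe] at h2; exact (Finset.mem_filter.1 h2).2
    have hPex : ∀ k, k ∈ K ∧ u ∈ Q k →
        ∃ l', DiPath (TCAdj D) k.1 k.2 l' ∧ l'.length < (Q k).length ∧
          (∀ e ∈ listEdges l', e.1 ≠ u → e.1 ≠ v → e ∈ listEdges (Q k)) ∧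
          (∀ e ∈ listEdges l', e.1 = u → ∃ e' ∈ listEdges (Q k), e'.1 = v ∧ e.2 = e'.2) ∧
          (∀ e ∈ listEdges l', e.1 = v → ∃ e' ∈ listEdges (Q k), e'.1 = u ∧ e.2 = e'.2) := by
      rintro k ⟨hk, hu'⟩
      have hv' : v ∈ Q k := (hiff k hk).1 hu'
      have hut : u ≠ k.2 := fun h => huL (Finset.mem_image.2 ⟨k, hk, h.symm⟩)
      have hvt : v ≠ k.2 := fun h => hvL (Finset.mem_image.2 ⟨k, hk, h.symm⟩)
      exact surgery (hQ.1 k hk) hu' hv' huv hut hvt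
    set Q' : V × V → List V :=
      fun k => if h : k ∈ K ∧ u ∈ Q k then (hPex k h).choose else Q k with hQ'def
    have hQ'spec : ∀ k (h : k ∈ K ∧ u ∈ Q k), Q' k = (hPex k h).choose := by
      intro k h; rw [hQ'def]; simp only [dif_pos h]
    have hQ'neg : ∀ k, ¬(k ∈ K ∧ u ∈ Q k) → Q' k = Q k := by
      intro k h; rw [hQ'def]; simp only [dif_neg h]
    have hSys' : Sys Q' := by
      constructor
      · intro k hk
        by_cases h : k ∈ K ∧ u ∈ Q k
        · rw [hQ'spec k h]; exact ((hPex k h).choose_spec).1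
        · rw [hQ'neg k h]; exact hQ.1 k hk
      · intro x
        by_cases hxu : x = u
        · skip
          have hsub : ((K.biUnion fun k => (listEdges (Q' k)).toFinset).filter fun e => e.1 = x)
              ⊆ Finset.image (fun e => (x, e.2))
                  ((K.biUnion fun k => (listEdges (Q k)).toFinset).filter (fun e => e.1 = v)) := by
            intro e he
            obtain ⟨heH, heX⟩ := Finset.mem_filter.1 he
            obtain ⟨k, hk, hek⟩ := Finset.mem_biUnion.1 heH
            rw [List.mem_toFinset] at hek
            by_cases h : k ∈ K ∧ u ∈ Q k
            · rw [hQ'spec k h] at hek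
              obtain ⟨e', he', h1, h2⟩ := ((hPex k h).choose_spec).2.2.2.1 e hek (heX.trans hxu)
              refine Finset.mem_image.2 ⟨e', Finset.mem_filter.2
                ⟨Finset.mem_biUnion.2 ⟨k, hk, List.mem_toFinset.2 he'⟩, h1⟩, ?_⟩
              exact Prod.ext heX.symm h2.symm
            · rw [hQ'neg k h] at hek
              exact absurd ⟨hk, (heX.trans hxu) ▸ (edge_mem hek).1⟩ h
          calc _ ≤ _ := Finset.card_le_card hsub
            _ ≤ _ := Finset.card_image_le
            _ ≤ T := hQ.2 v
        · by_cases hxv : x = v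
          · skip
            have hsub : ((K.biUnion fun k => (listEdges (Q' k)).toFinset).filter fun e => e.1 = x)
                ⊆ Finset.image (fun e => (x, e.2))
                    ((K.biUnion fun k => (listEdges (Q k)).toFinset).filter (fun e => e.1 = u)) := by
              intro e he
              obtain ⟨heH, heX⟩ := Finset.mem_filter.1 he
              obtain ⟨k, hk, hek⟩ := Finset.mem_biUnion.1 heH
              rw [List.mem_toFinset] at hek
              by_cases h : k ∈ K ∧ u ∈ Q k
              · rw [hQ'spec k h] at hek
                obtain ⟨e', he', h1, h2⟩ := ((hPex k h).choose_spec).2.2.2.2 e hek (heX.trans hxv)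
                refine Finset.mem_image.2 ⟨e', Finset.mem_filter.2
                  ⟨Finset.mem_biUnion.2 ⟨k, hk, List.mem_toFinset.2 he'⟩, h1⟩, ?_⟩
                exact Prod.ext heX.symm h2.symm
              · rw [hQ'neg k h] at hek
                have hxk : x ∈ Q k := heX ▸ (edge_mem hek).1
                exact absurd ⟨hk, (hiff k hk).2 (hxv ▸ hxk)⟩ h
            calc _ ≤ _ := Finset.card_le_card hsub
              _ ≤ _ := Finset.card_image_le
              _ ≤ T := hQ.2 u
          · have hsub : ((K.biUnion fun k => (listEdges (Q' k)).toFinset).filter fun e => e.1 = x)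
                ⊆ ((K.biUnion fun k => (listEdges (Q k)).toFinset).filter fun e => e.1 = x) := by
              intro e he
              obtain ⟨heH, heX⟩ := Finset.mem_filter.1 he
              obtain ⟨k, hk, hek⟩ := Finset.mem_biUnion.1 heH
              rw [List.mem_toFinset] at hek
              by_cases h : k ∈ K ∧ u ∈ Q k
              · rw [hQ'spec k h] at hek
                have hme := ((hPex k h).choose_spec).2.2.1 e hek
                  (fun hh => hxu (heX ▸ hh ▸ rfl)) (fun hh => hxv (heX ▸ hh ▸ rfl))
                exact Finset.mem_filter.2
                  ⟨Finset.mem_biUnion.2 ⟨k, hk, List.mem_toFinset.2 hme⟩, heX⟩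
              · rw [hQ'neg k h] at hek
                exact Finset.mem_filter.2
                  ⟨Finset.mem_biUnion.2 ⟨k, hk, List.mem_toFinset.2 hek⟩, heX⟩
            exact le_trans (Finset.card_le_card hsub) (hQ.2 x)
    have hsum : (∑ k ∈ K, (Q' k).length) < ∑ k ∈ K, (Q k).length := by
      obtain ⟨k0, hk0, hu0⟩ : ∃ k ∈ K, u ∈ Q k := by
        obtain ⟨k, hk, hmem⟩ := Finset.mem_biUnion.1 hu
        exact ⟨k, hk, List.mem_toFinset.1 hmem⟩
      refine Finset.sum_lt_sum ?_ ⟨k0, hk0, ?_⟩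
      · intro k hk
        by_cases h : k ∈ K ∧ u ∈ Q k
        · rw [hQ'spec k h]; exact le_of_lt ((hPex k h).choose_spec).2.1
        · rw [hQ'neg k h]
      · rw [hQ'spec k0 ⟨hk0, hu0⟩]; exact ((hPex k0 ⟨hk0, hu0⟩).choose_spec).2.1
    exact Nat.find_min hex (hQn ▸ hsum) ⟨Q', hSys', rfl⟩
  refine ⟨Q, hQ.1, ⟨?_, hQ.2, ?_⟩, ?_⟩
  · intro e he
    obtain ⟨k, hk, hek⟩ := Finset.mem_biUnion.1 he
    rw [List.mem_toFinset] at hek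
    exact chain'_edges (hQ.1 k hk).1 e hek
  · intro k hk
    refine ⟨Q k, ?_, (hQ.1 k hk).2⟩
    refine chain'_of_edges fun e he => ?_
    show (e.1, e.2) ∈ _
    exact Finset.mem_biUnion.2 ⟨k, hk, List.mem_toFinset.2 he⟩
  · set f : V → Finset (V × V) := fun x => K.filter fun k => x ∈ Q k with hfdef
    have hinj : Set.InjOn f ↑(W \ LastF) := by
      intro a ha b hb hab
      rw [Finset.mem_coe, Finset.mem_sdiff] at ha hb
      exact key a b ha.1 ha.2 hb.2 hab
    have himg : (W \ LastF).image f ⊆ K.powerset.erase ∅ := by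
      intro S hS
      obtain ⟨x, hx, rfl⟩ := Finset.mem_image.1 hS
      rw [Finset.mem_sdiff] at hx
      obtain ⟨k, hk, hmem⟩ := Finset.mem_biUnion.1 hx.1
      refine Finset.mem_erase.2 ⟨?_, Finset.mem_powerset.2 (Finset.filter_subset _ _)⟩
      exact Finset.ne_empty_of_mem (Finset.mem_filter.2 ⟨hk, List.mem_toFinset.1 hmem⟩)
    have h1 : (W \ LastF).card ≤ 2 ^ K.card - 1 := by
      rw [← Finset.card_image_of_injOn hinj]
      refine le_trans (Finset.card_le_card himg) ?_
      rw [Finset.card_erase_of_mem (Finset.empty_mem_powerset K), Finset.card_powerset]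
    have h2 : LastF.card ≤ K.card := Finset.card_image_le
    have h3 : W.card ≤ (W \ LastF).card + LastF.card := Finset.card_le_card_sdiff_add_card
    have h4 : 1 ≤ 2 ^ K.card := Nat.one_le_two_pow
    rw [← hWdef]
    omega
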